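/- Let A be a Zinbiel algebra over ℂ (i.e., an algebra satisfying (xy)z = x(yz+zy)). Define a new product on A by [x,y] = xy - yx. Then (A, [-,-]) is a Tortkara algebra, i.e., it is anticommutative and satisfies [[a,b],[c,b]] = [J(a,b,c),b], where J(a,b,c) = [[a,b],c] + [[b,c],a] + [[c,a],b]. -/

import Mathlib

/-- The Jacobian `J(a,b,c) = (ab)c + (bc)a + (ca)b` of a multiplication. -/
def Jac {A : Type*} [Add A] (mul : A → A → A) (a b c : A) : A :=
  mul (mul a b) c + mul (mul b c) a + mul (mul c a) b

/-- A multiplication is Tortkara if it is anticommutative and satisfies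
`(ab)(cb) = J(a,b,c)b`. -/
def IsTortkara {A : Type*} [AddCommGroup A] (mul : A → A → A) : Prop :=
  (∀ x y, mul x y = - mul y x) ∧
  ∀ a b c, mul (mul a b) (mul c b) = mul (Jac mul a b c) b

/-- If `A` is a Zinbiel algebra over `ℂ`, then the commutator bracket
`[x,y] = xy - yx` makes `A` a Tortkara algebra. -/
theorem zinbiel_commutator_isTortkara {A : Type*} [AddCommGroup A] [Module ℂ A]
    (m : A →ₗ[ℂ] A →ₗ[ℂ] A)
    (hZ : ∀ x y z : A, m (m x y) z = m x (m y z + m z y)) :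
    IsTortkara (fun x y : A => m x y - m y x) := by
  constructor
  · intro x y
    simp only [neg_sub]
  · intro a b c
    simp only [Jac, map_add, map_sub, LinearMap.add_apply, LinearMap.sub_apply, hZ]
    abel
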